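/- Let q be a prime power, l ≥ 1, t = q^l, and F = GF(t²) (so GF(q) ⊆ GF(t) ⊆ F). Let L₆ = (α₁, …, αₙ) enumerate the set {α ∈ F : α^{t+1} + 1 ≠ 0}. Then for every integer i with 1 < i < q−1, the minimum Hamming weight of a nonzero codeword of the q-ary Goppa code Γ(L₆, (X^{t+1} + 1)^i) is exactly i(t+1) + 1; that is, every nonzero codeword has Hamming weight at least i(t+1) + 1, and there exists a codeword of Hamming weight exactly i(t+1) + 1. -/

import Mathlib

open Polynomial

/-- The syndrome polynomial `Σᵢ cᵢ ∏_{j≠i} (X − αⱼ)` of a word `c ∈ GF(q)ⁿ` with respect to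
the locator tuple `α`, with coefficients viewed in the extension field `F`. -/
noncomputable def goppaSum {K F : Type*} [Field K] [Field F] [Algebra K F] {n : ℕ}
    (α : Fin n → F) (c : Fin n → K) : Polynomial F :=
  ∑ i, Polynomial.C (algebraMap K F (c i)) *
    ∏ j ∈ Finset.univ.erase i, (Polynomial.X - Polynomial.C (α j))

open Finset

section GoppaHelpers
variable {F : Type*} [Field F] {ι : Type*} [DecidableEq ι]

theorem goppa_coprime_X_sub_C {p : F[X]} {a : F} (h : eval a p ≠ 0) :
    IsCoprime (X - C a) p := by
  have h1 := modByMonic_add_div p (X - C a)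
  rw [modByMonic_X_sub_C_eq_C_eval] at h1
  have h2 : C (eval a p)⁻¹ * C (eval a p) = 1 := by
    rw [← C_mul, inv_mul_cancel₀ h, C_1]
  refine ⟨-(C (eval a p)⁻¹ * (p /ₘ (X - C a))), C (eval a p)⁻¹, ?_⟩
  rw [← h2]
  linear_combination (-(C (eval a p)⁻¹) : F[X]) * h1

theorem goppa_eval_nodeSum (s : Finset ι) (v : ι → F) (b : ι → F) {k : ι} (hk : k ∈ s) :
    eval (v k) (∑ j ∈ s, C (b j) * ∏ l ∈ s.erase j, (X - C (v l)))
      = b k * ∏ l ∈ s.erase k, (v k - v l) := by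
  rw [eval_finset_sum, Finset.sum_eq_single_of_mem k hk]
  · simp [eval_prod]
  · intro j hj hjk
    rw [eval_mul, eval_prod]
    apply mul_eq_zero_of_right
    exact Finset.prod_eq_zero (i := k) (Finset.mem_erase.mpr ⟨Ne.symm hjk, hk⟩) (by simp)

theorem goppa_natDegree_nodeSum_le (s : Finset ι) (v : ι → F) (b : ι → F) :
    natDegree (∑ j ∈ s, C (b j) * ∏ l ∈ s.erase j, (X - C (v l))) ≤ s.card - 1 := by
  apply natDegree_sum_le_of_forall_le
  intro j hj
  refine le_trans natDegree_mul_le ?_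
  rw [natDegree_C, zero_add]
  refine le_trans (natDegree_prod_le _ _) ?_
  calc ∑ l ∈ s.erase j, (X - C (v l)).natDegree ≤ ∑ l ∈ s.erase j, 1 := by
        apply Finset.sum_le_sum; intro l _; rw [natDegree_X_sub_C]
    _ = s.card - 1 := by rw [Finset.sum_const, smul_eq_mul, mul_one, Finset.card_erase_of_mem hj]

theorem goppa_derivative_finset_prod (s : Finset ι) (f : ι → F[X]) :
    derivative (∏ j ∈ s, f j) = ∑ j ∈ s, (∏ l ∈ s.erase j, f l) * derivative (f j) := by
  rw [Finset.prod_eq_multiset_prod, derivative_prod, Finset.sum_eq_multiset_sum]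
  refine congr_arg Multiset.sum (Multiset.map_congr rfl fun j hj => ?_)
  rw [← Finset.erase_val, ← Finset.prod_eq_multiset_prod]

theorem goppa_eval_derivative_prod (s : Finset ι) (v : ι → F) {k : ι} (hk : k ∈ s) :
    eval (v k) (derivative (∏ j ∈ s, (X - C (v j)))) = ∏ l ∈ s.erase k, (v k - v l) := by
  rw [goppa_derivative_finset_prod, eval_finset_sum, Finset.sum_eq_single_of_mem k hk]
  · simp [eval_prod]
  · intro j hj hjk
    rw [eval_mul, eval_prod]
    apply mul_eq_zero_of_left
    exact Finset.prod_eq_zero (i := k) (Finset.mem_erase.mpr ⟨Ne.symm hjk, hk⟩) (by simp)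

theorem goppa_prod_erase_split {M : Type*} [CommMonoid M] {n : ℕ} (s : Finset (Fin n))
    {k : Fin n} (hk : k ∈ s) (f : Fin n → M) :
    ∏ j ∈ Finset.univ.erase k, f j = (∏ j ∈ s.erase k, f j) * ∏ j ∈ Finset.univ \ s, f j := by
  rw [← Finset.prod_union]
  · congr 1
    ext j
    simp only [Finset.mem_erase, Finset.mem_union, Finset.mem_sdiff, Finset.mem_univ,
      true_and, and_true]
    constructor
    · intro hj
      by_cases hjs : j ∈ s
      · exact Or.inl ⟨hj, hjs⟩
      · exact Or.inr hjs
    · rintro (⟨hj, _⟩ | hjs)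
      · exact hj
      · rintro rfl; exact hjs hk
  · refine Finset.disjoint_left.mpr ?_
    intro j hj hj'
    exact (Finset.mem_sdiff.mp hj').2 ((Finset.erase_subset _ _) hj)

end GoppaHelpers

theorem goppa_lower_bound {K F : Type*} [Field K] [DecidableEq K] [Field F] [Algebra K F]
    {n : ℕ} (α : Fin n → F) (hα : Function.Injective α) (G : Polynomial F)
    (hGeval : ∀ j : Fin n, eval (α j) G ≠ 0)
    (c : Fin n → K) (hdvd : G ∣ goppaSum α c) (hc : c ≠ 0) :
    G.natDegree + 1 ≤ (Finset.univ.filter fun k => c k ≠ 0).card := by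
  classical
  set φ := algebraMap K F with hφdef
  set S : Finset (Fin n) := Finset.univ.filter (fun k => c k ≠ 0) with hS
  have hmem : ∀ k, k ∈ S ↔ c k ≠ 0 := by intro k; simp [hS]
  obtain ⟨k₀, hk₀⟩ := Function.ne_iff.mp hc
  have hk₀' : c k₀ ≠ 0 := by simpa using hk₀
  have hk₀S : k₀ ∈ S := (hmem k₀).mpr hk₀'
  set g : Polynomial F := ∑ k ∈ S, C (φ (c k)) * ∏ j ∈ S.erase k, (X - C (α j)) with hg
  have hfact : goppaSum α c = (∏ j ∈ Finset.univ \ S, (X - C (α j))) * g := by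
    rw [hg, Finset.mul_sum]
    simp only [goppaSum]
    rw [← Finset.sum_subset (Finset.subset_univ S) (fun k _ hk => ?_)]
    · apply Finset.sum_congr rfl
      intro k hk
      rw [goppa_prod_erase_split S hk (fun j => X - C (α j))]
      ring
    · have hck : c k = 0 := by
        by_contra h; exact hk ((hmem k).mpr h)
      simp [hck]
  have hg0 : g ≠ 0 := by
    intro h
    have he := goppa_eval_nodeSum S α (fun k => φ (c k)) hk₀S
    rw [← hg, h, eval_zero] at he
    have : φ (c k₀) * ∏ l ∈ S.erase k₀, (α k₀ - α l) ≠ 0 := by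
      apply mul_ne_zero
      · simpa using hk₀'
      · exact Finset.prod_ne_zero_iff.mpr fun l hl =>
          sub_ne_zero.mpr fun hh => (Finset.mem_erase.mp hl).1 (hα hh.symm)
    exact this he.symm
  have hcop : IsCoprime G (∏ j ∈ Finset.univ \ S, (X - C (α j))) :=
    IsCoprime.prod_right fun j _ => (goppa_coprime_X_sub_C (hGeval j)).symm
  have hdg : G ∣ g := hcop.dvd_of_dvd_mul_left (hfact ▸ hdvd)
  have h1 : G.natDegree ≤ g.natDegree := natDegree_le_of_dvd hdg hg0
  have h2 : g.natDegree ≤ S.card - 1 := goppa_natDegree_nodeSum_le S α _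
  have h3 : 1 ≤ S.card := Finset.card_pos.mpr ⟨k₀, hk₀S⟩
  omega

set_option maxHeartbeats 2000000 in
/-- with `t = q^l`, `F = GF(t²)` and `L₆` enumerating
`{α ∈ F : α^{t+1} + 1 ≠ 0}`, for `1 < i < q − 1` the minimum Hamming weight of a nonzero
codeword of `Γ(L₆, (X^{t+1} + 1)^i)` is exactly `i(t+1) + 1`. -/
theorem goppa_G6_min_distance {K F : Type*} [Field K] [Fintype K] [DecidableEq K]
    [Field F] [Fintype F] [Algebra K F]
    (q l : ℕ) (hq : Fintype.card K = q) (hl : 1 ≤ l)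
    (hF : Fintype.card F = (q ^ l) ^ 2)
    {n : ℕ} (α : Fin n → F) (hα : Function.Injective α)
    (hrange : ∀ x : F, x ∈ Set.range α ↔ x ^ (q ^ l + 1) + 1 ≠ 0)
    (i : ℕ) (hi1 : 1 < i) (hi2 : i < q - 1) :
    (∀ c : Fin n → K, ((Polynomial.X ^ (q ^ l + 1) + 1) ^ i ∣ goppaSum α c) → c ≠ 0 →
        i * (q ^ l + 1) + 1 ≤ (Finset.univ.filter fun k => c k ≠ 0).card) ∧
      (∃ c : Fin n → K, ((Polynomial.X ^ (q ^ l + 1) + 1) ^ i ∣ goppaSum α c) ∧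
        (Finset.univ.filter fun k => c k ≠ 0).card = i * (q ^ l + 1) + 1) := by
  classical
  have hq4 : 4 ≤ q := by omega
  set t := q ^ l with ht
  have ht4 : 4 ≤ t := le_trans hq4 (Nat.le_self_pow (by omega) q)
  set φ := algebraMap K F with hφdef
  have hφ : Function.Injective φ := (algebraMap K F).injective
  have hGmonic : ((X : Polynomial F) ^ (t + 1) + 1).Monic := by
    rw [← C_1]; exact monic_X_pow_add_C _ (by omega)
  have hGdeg : ((X : Polynomial F) ^ (t + 1) + 1).natDegree = t + 1 := by
    rw [← C_1]; exact natDegree_X_pow_add_C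
  constructor
  · -- lower bound: designed distance of the Goppa code
    intro c hdvd hc
    have h := goppa_lower_bound α hα ((X ^ (t + 1) + 1) ^ i) (fun j => ?_) c hdvd hc
    · rwa [hGmonic.natDegree_pow, hGdeg] at h
    · rw [eval_pow, eval_add, eval_pow, eval_X, eval_one]
      exact pow_ne_zero _ ((hrange (α j)).mp ⟨j, rfl⟩)
  · -- existence of a codeword of weight i(t+1)+1
    -- characteristic facts
    have hqK : ((q : ℕ) : K) = 0 := by rw [← hq]; exact FiniteField.cast_card_eq_zero K
    have hqF : ((q : ℕ) : F) = 0 := by rw [← map_natCast φ q, hqK, map_zero]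
    have htF : ((t : ℕ) : F) = 0 := by rw [ht, Nat.cast_pow, hqF, zero_pow (by omega)]
    have hm1F : ((t + 1 : ℕ) : F) = 1 := by push_cast [htF]; rw [zero_add]
    -- choose A ⊆ K \ {0, -1} with |A| = i
    have h01 : (0 : K) ∉ ({-1} : Finset K) := by
      simp only [Finset.mem_singleton]
      intro h
      exact one_ne_zero (neg_eq_zero.mp h.symm)
    have hcardK : ((Finset.univ : Finset K) \ {0, -1}).card = q - 2 := by
      rw [Finset.card_sdiff_of_subset (Finset.subset_univ _), Finset.card_univ, hq]
      congr 1
      rw [show ({0, -1} : Finset K) = insert 0 {-1} from rfl,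
        Finset.card_insert_of_notMem h01, Finset.card_singleton]
    obtain ⟨A, hA_sub, hA_card⟩ :=
      Finset.exists_subset_card_eq (s := (Finset.univ : Finset K) \ {0, -1}) (n := i)
        (by rw [hcardK]; omega)
    have hAmem : ∀ a ∈ A, a ≠ 0 ∧ a ≠ -1 := by
      intro a ha
      have := hA_sub ha
      simp only [Finset.mem_sdiff, Finset.mem_insert, Finset.mem_singleton] at this
      exact ⟨fun h => this.2 (Or.inl h), fun h => this.2 (Or.inr h)⟩
    have hA0 : ∀ a ∈ A, a ≠ 0 := fun a ha => (hAmem a ha).1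
    have hA1 : ∀ a ∈ A, a + 1 ≠ 0 := fun a ha h =>
      (hAmem a ha).2 (eq_neg_of_add_eq_zero_left h)
    -- the polynomial H = X * ∏ (X^(t+1) - φ a)
    set W : Polynomial F := ∏ a ∈ A, (X ^ (t + 1) - C (φ a)) with hWdef
    have hWm : ∀ a : K, ((X : Polynomial F) ^ (t + 1) - C (φ a)).Monic := by
      intro a
      have := monic_X_pow_add_C (R := F) (-(φ a)) (n := t + 1) (by omega)
      simpa [sub_eq_add_neg] using this
    have hW_monic : W.Monic := monic_prod_of_monic _ _ fun a _ => hWm a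
    have hWdeg1 : ∀ a : K, ((X : Polynomial F) ^ (t + 1) - C (φ a)).natDegree = t + 1 := by
      intro a
      rw [sub_eq_add_neg, ← C_neg, natDegree_X_pow_add_C]
    have hW_deg : W.natDegree = i * (t + 1) := by
      rw [hWdef, natDegree_prod _ _ fun a _ => (hWm a).ne_zero]
      rw [Finset.sum_congr rfl fun a _ => hWdeg1 a, Finset.sum_const, smul_eq_mul, hA_card]
    set H : Polynomial F := X * W with hHdef
    have hH_monic : H.Monic := monic_X.mul hW_monic
    have hH0 : H ≠ 0 := hH_monic.ne_zero
    have hH_deg : H.natDegree = i * (t + 1) + 1 := by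
      rw [hHdef, natDegree_mul X_ne_zero hW_monic.ne_zero, natDegree_X, hW_deg]; omega
    -- H divides X^N - X
    have hφt : ∀ a ∈ A, (φ a) ^ (t - 1) = 1 := by
      intro a ha
      obtain ⟨e, he⟩ : q - 1 ∣ t - 1 := by
        rw [ht]; simpa using Nat.sub_dvd_pow_sub_pow q 1 l
      have haq : a ^ (q - 1) = 1 := by
        rw [← hq]; exact FiniteField.pow_card_sub_one_eq_one a (hA0 a ha)
      rw [← map_pow, he, pow_mul, haq, one_pow, map_one]
    have hNeq : (t + 1) * (t - 1) = t ^ 2 - 1 := by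
      apply Nat.eq_sub_of_add_eq
      obtain ⟨s, hs⟩ : ∃ s, t = s + 1 := ⟨t - 1, by omega⟩
      rw [hs, Nat.add_sub_cancel]
      ring
    have hN2 : 1 < Fintype.card F := by rw [hF]; nlinarith
    have hHdvd : H ∣ X ^ (Fintype.card F) - X := by
      have hWdvd : W ∣ X ^ (t ^ 2 - 1) - 1 := by
        rw [hWdef]
        apply Finset.prod_dvd_of_coprime
        · intro a ha b hb hab
          simp only [Function.onFun]
          have hba : φ b - φ a ≠ 0 := sub_ne_zero.mpr fun h => hab (hφ h).symm
          have hCe : C (φ b - φ a)⁻¹ * C (φ b - φ a) = 1 := by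
            rw [← C_mul, inv_mul_cancel₀ hba, C_1]
          refine ⟨C (φ b - φ a)⁻¹, -(C (φ b - φ a)⁻¹), ?_⟩
          rw [← hCe, map_sub]
          ring
        · intro a ha
          have hx1 : ((X : Polynomial F) ^ (t + 1)) ^ (t - 1) = X ^ (t ^ 2 - 1) := by
            rw [← pow_mul, hNeq]
          have h1 : X ^ (t ^ 2 - 1) - (1 : Polynomial F)
              = ((X : Polynomial F) ^ (t + 1)) ^ (t - 1) - (C (φ a)) ^ (t - 1) := by
            rw [hx1, ← map_pow, hφt a ha, map_one]
          rw [h1]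
          exact sub_dvd_pow_sub_pow _ _ _
      have hsplit : (X : Polynomial F) ^ (Fintype.card F) - X
          = X * (X ^ (t ^ 2 - 1) - 1) := by
        rw [mul_sub, mul_one, ← pow_succ']
        congr 2
        rw [hF]
        have h1t : 1 ≤ t ^ 2 := by nlinarith
        omega
      rw [hsplit, hHdef]
      exact mul_dvd_mul dvd_rfl hWdvd
    -- T := roots of H, |T| = i(t+1)+1
    have hXN0 : (X ^ Fintype.card F - X : Polynomial F) ≠ 0 :=
      FiniteField.X_pow_card_sub_X_ne_zero F hN2
    have hsplits : Splits (X ^ Fintype.card F - X : Polynomial F) := by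
      rw [splits_iff_card_roots, FiniteField.roots_X_pow_card_sub_X,
        FiniteField.X_pow_card_sub_X_natDegree_eq F hN2]
      exact Finset.card_univ
    have hHsplits : Splits H :=
      hsplits.of_dvd hXN0 hHdvd
    have hroots_card : Multiset.card H.roots = i * (t + 1) + 1 := by
      rw [splits_iff_card_roots.mp hHsplits, hH_deg]
    have hnodup : H.roots.Nodup := by
      refine Multiset.nodup_of_le (roots.le_of_dvd hXN0 hHdvd) ?_
      rw [FiniteField.roots_X_pow_card_sub_X]
      exact Finset.univ.nodup
    set T : Finset F := H.roots.toFinset with hTdef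
    have hT_card : T.card = i * (t + 1) + 1 := by
      rw [hTdef, Multiset.toFinset_card_of_nodup hnodup, hroots_card]
    have hH_eq : H = ∏ x ∈ T, (X - C x) := by
      have h := hHsplits.eq_prod_roots_of_monic hH_monic
      rw [Finset.prod_eq_multiset_prod, hTdef, Multiset.toFinset_val,
        Multiset.dedup_eq_self.mpr hnodup]
      exact h
    have hmemT : ∀ x : F, x ∈ T ↔ (x = 0 ∨ ∃ a ∈ A, φ a = x ^ (t + 1)) := by
      intro x
      have hev : eval x H = x * ∏ a ∈ A, (x ^ (t + 1) - φ a) := by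
        rw [hHdef, eval_mul, eval_X, hWdef, eval_prod]
        simp only [eval_sub, eval_pow, eval_X, eval_C]
      rw [hTdef, Multiset.mem_toFinset, mem_roots hH0, IsRoot.def, hev, mul_eq_zero,
        Finset.prod_eq_zero_iff]
      apply or_congr Iff.rfl
      constructor
      · rintro ⟨a, ha, hax⟩; exact ⟨a, ha, by linear_combination -hax⟩
      · rintro ⟨a, ha, hax⟩; exact ⟨a, ha, by linear_combination -hax⟩
    have hTsub : ∀ x ∈ T, x ∈ Set.range α := by
      intro x hx
      rw [hrange]
      rcases (hmemT x).1 hx with rfl | ⟨a, ha, hax⟩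
      · rw [zero_pow (by omega : t + 1 ≠ 0), zero_add]; exact one_ne_zero
      · rw [← hax, ← map_one φ, ← map_add]
        intro h
        exact hA1 a ha ((_root_.map_eq_zero φ).mp h)
    -- S := indices of T
    set S : Finset (Fin n) := Finset.univ.filter (fun k => α k ∈ T) with hSdef
    have hmemS : ∀ k, k ∈ S ↔ α k ∈ T := by intro k; simp [hSdef]
    have hTim : T = S.image α := by
      ext x
      constructor
      · intro hx
        obtain ⟨k, rfl⟩ := hTsub x hx
        exact Finset.mem_image.mpr ⟨k, (hmemS k).mpr hx, rfl⟩
      · intro hx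
        obtain ⟨k, hk, rfl⟩ := Finset.mem_image.mp hx
        exact (hmemS k).mp hk
    have hS_card : S.card = i * (t + 1) + 1 := by
      rw [← hT_card, hTim, Finset.card_image_of_injOn hα.injOn]
    have hSH : H = ∏ k ∈ S, (X - C (α k)) := by
      rw [hH_eq, hTim, Finset.prod_image fun x _ y _ hxy => hα hxy]
    -- the codeword c
    set c : Fin n → K := fun k =>
      if h : ∃ a ∈ A, φ a = (α k) ^ (t + 1) then
        (h.choose + 1) ^ i * (h.choose * ∏ b ∈ A.erase h.choose, (h.choose - b))⁻¹
      else if α k = 0 then (∏ a ∈ A, (-a))⁻¹ else 0 with hc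
    have hck_pos : ∀ k (h : ∃ a ∈ A, φ a = (α k) ^ (t + 1)),
        c k = (h.choose + 1) ^ i * (h.choose * ∏ b ∈ A.erase h.choose, (h.choose - b))⁻¹ :=
      fun k h => dif_pos h
    have hck_neg : ∀ k, ¬(∃ a ∈ A, φ a = (α k) ^ (t + 1)) → α k = 0 →
        c k = (∏ a ∈ A, (-a))⁻¹ := by
      intro k h h0
      show dite _ _ _ = _
      rw [dif_neg h, if_pos h0]
    have hck_zero : ∀ k, k ∉ S → c k = 0 := by
      intro k hk
      have hnot : ¬ (α k = 0 ∨ ∃ a ∈ A, φ a = (α k) ^ (t + 1)) := by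
        rw [← hmemT]; exact fun h => hk ((hmemS k).mpr h)
      rw [not_or] at hnot
      show dite _ _ _ = _
      rw [dif_neg hnot.2, if_neg hnot.1]
    have hden : ∀ a ∈ A, a * ∏ b ∈ A.erase a, (a - b) ≠ 0 := by
      intro a ha
      exact mul_ne_zero (hA0 a ha) (Finset.prod_ne_zero_iff.mpr fun b hb =>
        sub_ne_zero.mpr (Ne.symm (Finset.mem_erase.mp hb).1))
    have hprodA : (∏ a ∈ A, (-a)) ≠ 0 :=
      Finset.prod_ne_zero_iff.mpr fun a ha => neg_ne_zero.mpr (hA0 a ha)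
    have hck_ne : ∀ k ∈ S, c k ≠ 0 := by
      intro k hk
      by_cases h : ∃ a ∈ A, φ a = (α k) ^ (t + 1)
      · rw [hck_pos k h]
        exact mul_ne_zero (pow_ne_zero _ (hA1 _ h.choose_spec.1))
          (inv_ne_zero (hden _ h.choose_spec.1))
      · have h0 : α k = 0 := by
          rcases (hmemT (α k)).1 ((hmemS k).1 hk) with h0 | hex
          · exact h0
          · exact absurd hex h
        rw [hck_neg k h h0]
        exact inv_ne_zero hprodA
    -- derivative computation
    have hderW : derivative W
        = ∑ a ∈ A, (∏ b ∈ A.erase a, (X ^ (t + 1) - C (φ b))) * X ^ t := by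
      rw [hWdef, goppa_derivative_finset_prod]
      apply Finset.sum_congr rfl
      intro a _
      rw [derivative_sub, derivative_C, sub_zero, derivative_X_pow, hm1F, C_1, one_mul,
        Nat.add_sub_cancel]
    have hdH : derivative H = W + X * derivative W := by
      rw [hHdef, derivative_mul, derivative_X, one_mul]
    have hkey : ∀ k ∈ S, φ (c k) * eval (α k) (derivative H)
        = ((α k) ^ (t + 1) + 1) ^ i := by
      intro k hk
      by_cases h : ∃ a ∈ A, φ a = (α k) ^ (t + 1)
      · obtain ⟨ha₀A, ha₀⟩ := h.choose_spec
        set a₀ := h.choose with ha₀def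
        have hevalW : eval (α k) W = 0 := by
          rw [hWdef, eval_prod]
          refine Finset.prod_eq_zero ha₀A ?_
          rw [eval_sub, eval_pow, eval_X, eval_C, ← ha₀, sub_self]
        have hsum : ∑ a ∈ A,
              eval (α k) ((∏ b ∈ A.erase a, ((X : Polynomial F) ^ (t + 1) - C (φ b))) * X ^ t)
            = eval (α k)
              ((∏ b ∈ A.erase a₀, ((X : Polynomial F) ^ (t + 1) - C (φ b))) * X ^ t) := by
          refine Finset.sum_eq_single_of_mem a₀ ha₀A fun b hb hba => ?_
          rw [eval_mul, eval_prod]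
          refine mul_eq_zero_of_left
            (Finset.prod_eq_zero (i := a₀) (Finset.mem_erase.mpr ⟨Ne.symm hba, ha₀A⟩) ?_) _
          rw [eval_sub, eval_pow, eval_X, eval_C, ← ha₀, sub_self]
        have hxder : (α k) * eval (α k) (derivative W)
            = φ (a₀ * ∏ b ∈ A.erase a₀, (a₀ - b)) := by
          rw [hderW, eval_finset_sum, hsum, eval_mul, eval_prod, eval_pow, eval_X]
          have hfac : (∏ b ∈ A.erase a₀, eval (α k) ((X : Polynomial F) ^ (t + 1) - C (φ b)))
              = ∏ b ∈ A.erase a₀, (φ a₀ - φ b) :=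
            Finset.prod_congr rfl fun b _ => by rw [eval_sub, eval_pow, eval_X, eval_C, ← ha₀]
          rw [hfac, map_mul, map_prod]
          simp only [map_sub]
          rw [show α k * ((∏ b ∈ A.erase a₀, (φ a₀ - φ b)) * (α k) ^ t)
              = (α k * (α k) ^ t) * ∏ b ∈ A.erase a₀, (φ a₀ - φ b) from by ring,
            ← pow_succ', ← ha₀]
        rw [hdH, eval_add, hevalW, zero_add, eval_mul, eval_X, hxder, hck_pos k h, ← ha₀def,
          ← map_mul, inv_mul_cancel_right₀ (hden a₀ ha₀A), map_pow, map_add, map_one, ha₀]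
      · have h0 : α k = 0 := by
          rcases (hmemT (α k)).1 ((hmemS k).1 hk) with h0 | hex
          · exact h0
          · exact absurd hex h
        have hW0 : eval (0 : F) W = φ (∏ a ∈ A, (-a)) := by
          rw [hWdef, eval_prod, map_prod]
          refine Finset.prod_congr rfl fun a _ => ?_
          rw [eval_sub, eval_pow, eval_X, eval_C, zero_pow (by omega : t + 1 ≠ 0), zero_sub,
            map_neg]
        rw [hdH, h0, eval_add, eval_mul, eval_X, zero_mul, add_zero, hW0, hck_neg k h h0,
          ← map_mul, inv_mul_cancel₀ hprodA, map_one, zero_pow (by omega : t + 1 ≠ 0),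
          zero_add, one_pow]
    -- interpolation identity
    have hn1 : i * (t + 1) + 1 ≤ n := by
      have := Finset.card_le_card (Finset.subset_univ S)
      rwa [hS_card, Finset.card_univ, Fintype.card_fin] at this
    set R : Polynomial F := ∏ j ∈ Finset.univ \ S, (X - C (α j)) with hRdef
    have hRmonic : R.Monic := monic_prod_of_monic _ _ fun j _ => monic_X_sub_C _
    have hcardu : (Finset.univ : Finset (Fin n)).card = n := by
      rw [Finset.card_univ, Fintype.card_fin]
    have hPQ : goppaSum α c = (X ^ (t + 1) + 1) ^ i * R := by
      apply eq_of_degrees_lt_of_eval_index_eq (v := α) Finset.univ hα.injOn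
      · rw [hcardu]
        apply lt_of_le_of_lt degree_le_natDegree
        have h1 : (goppaSum α c).natDegree ≤ n - 1 := by
          have h2 := goppa_natDegree_nodeSum_le Finset.univ α (fun k => φ (c k))
          rw [hcardu] at h2
          exact h2
        exact_mod_cast lt_of_le_of_lt h1 (by omega)
      · rw [hcardu]
        apply lt_of_le_of_lt degree_le_natDegree
        have h2 : ((X ^ (t + 1) + 1 : Polynomial F) ^ i * R).natDegree = n - 1 := by
          rw [natDegree_mul (hGmonic.pow i).ne_zero hRmonic.ne_zero, hGmonic.natDegree_pow,
            hGdeg, hRdef, natDegree_prod _ _ fun j _ => X_sub_C_ne_zero (α j)]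
          rw [Finset.sum_congr rfl fun j _ => natDegree_X_sub_C (α j), Finset.sum_const,
            smul_eq_mul, mul_one, Finset.card_sdiff_of_subset (Finset.subset_univ S), hS_card, hcardu]
          omega
        rw [h2]
        exact_mod_cast (by omega : n - 1 < n)
      · intro k _
        have hgl : eval (α k) (goppaSum α c)
            = φ (c k) * ∏ l ∈ Finset.univ.erase k, (α k - α l) :=
          goppa_eval_nodeSum Finset.univ α _ (Finset.mem_univ k)
        have hgr : eval (α k) ((X ^ (t + 1) + 1) ^ i * R)
            = ((α k) ^ (t + 1) + 1) ^ i * ∏ j ∈ Finset.univ \ S, (α k - α j) := by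
          rw [eval_mul, eval_pow, eval_add, eval_pow, eval_X, eval_one, hRdef, eval_prod]
          simp only [eval_sub, eval_X, eval_C]
        rw [hgl, hgr]
        by_cases hk : k ∈ S
        · rw [goppa_prod_erase_split S hk (fun j => α k - α j), ← mul_assoc]
          congr 1
          rw [show (∏ j ∈ S.erase k, (α k - α j))
              = eval (α k) (derivative (∏ j ∈ S, (X - C (α j)))) from
            (goppa_eval_derivative_prod S α hk).symm, ← hSH]
          exact hkey k hk
        · have hz : (∏ j ∈ Finset.univ \ S, (α k - α j)) = 0 :=
            Finset.prod_eq_zero (Finset.mem_sdiff.mpr ⟨Finset.mem_univ k, hk⟩) (sub_self (α k))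
          rw [hck_zero k hk, map_zero, zero_mul, hz, mul_zero]
    refine ⟨c, ⟨R, hPQ⟩, ?_⟩
    rw [← hS_card]
    congr 1
    ext k
    simp only [Finset.mem_filter, Finset.mem_univ, true_and]
    constructor
    · intro h; by_contra hk; exact h (hck_zero k hk)
    · exact fun hk => hck_ne k hk
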